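/- L²-in-time approximation of the temporal Ritz projection (established in the proof of Lemma 3.3, estimate (3.29)): let X be a complex Hilbert space, k ≥ 1 an integer, I = [a, a+τ] with τ > 0, and 0 ≤ m ≤ k. There exists a constant C depending only on k and m (independent of τ, u and X) such that for every u ∈ C^{m+1}(I;X), (∫_I ‖u(t) − (Ru)(t)‖² dt)^{1/2} ≤ C·τ^{m+3/2}·‖u‖_{W^{m+1,∞}(I;X)}. -/

import Mathlib

/-!
L²-in-time approximation of the temporal Ritz projection (estimate (3.29) in the proof
of Lemma 3.3): `(∫_I ‖u − Ru‖² dt)^{1/2} ≤ C τ^{m+3/2} ‖u‖_{W^{m+1,∞}(I;X)}`,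
with C depending only on k and m.
-/

open MeasureTheory

universe u

/-- `f : ℝ → X` is an `X`-valued polynomial of degree at most `m`. -/
def IsPolyDeg (X : Type*) [AddCommGroup X] [Module ℝ X] (m : ℕ) (f : ℝ → X) : Prop :=
  ∃ φ : Fin (m + 1) → X, ∀ t : ℝ, f t = ∑ i : Fin (m + 1), t ^ (i : ℕ) • φ i

namespace RitzAux

section Alg
variable {X : Type*} [AddCommGroup X] [Module ℝ X]

lemma isPolyDeg_zero (n : ℕ) : IsPolyDeg X n (fun _ => 0) :=
  ⟨fun _ => 0, by simp⟩

lemma isPolyDeg_add {n : ℕ} {f g : ℝ → X} (hf : IsPolyDeg X n f) (hg : IsPolyDeg X n g) :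
    IsPolyDeg X n (fun t => f t + g t) := by
  obtain ⟨φ, hφ⟩ := hf; obtain ⟨ψ, hψ⟩ := hg
  exact ⟨φ + ψ, fun t => by simp [hφ t, hψ t, ← Finset.sum_add_distrib, smul_add]⟩

lemma isPolyDeg_sub {n : ℕ} {f g : ℝ → X} (hf : IsPolyDeg X n f) (hg : IsPolyDeg X n g) :
    IsPolyDeg X n (fun t => f t - g t) := by
  obtain ⟨φ, hφ⟩ := hf; obtain ⟨ψ, hψ⟩ := hg
  exact ⟨φ - ψ, fun t => by simp [hφ t, hψ t, ← Finset.sum_sub_distrib, smul_sub]⟩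

lemma isPolyDeg_mono {n n' : ℕ} {f : ℝ → X} (hf : IsPolyDeg X n f) (h : n ≤ n') :
    IsPolyDeg X n' f := by
  obtain ⟨φ, hφ⟩ := hf
  refine ⟨fun i => if hi : (i : ℕ) < n + 1 then φ ⟨i, hi⟩ else 0, fun t => ?_⟩
  rw [hφ t]
  have h1 : ∑ i : Fin (n' + 1), t ^ (i : ℕ) •
      (if hi : (i : ℕ) < n + 1 then φ ⟨i, hi⟩ else 0)
      = ∑ i ∈ Finset.range (n' + 1), t ^ i • (if hi : i < n + 1 then φ ⟨i, hi⟩ else 0) :=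
    (Finset.sum_range (fun i : ℕ => t ^ i • (if hi : i < n + 1 then φ ⟨i, hi⟩ else 0))).symm
  have h2 : ∑ i ∈ Finset.range (n' + 1), t ^ i • (if hi : i < n + 1 then φ ⟨i, hi⟩ else 0)
      = ∑ i ∈ Finset.range (n + 1), t ^ i • (if hi : i < n + 1 then φ ⟨i, hi⟩ else 0) := by
    refine (Finset.sum_subset (Finset.range_subset_range.2 (by omega)) fun i _ hi => ?_).symm
    rw [Finset.mem_range, not_lt] at hi
    rw [dif_neg (by omega), smul_zero]
  have h3 : ∑ i ∈ Finset.range (n + 1), t ^ i • (if hi : i < n + 1 then φ ⟨i, hi⟩ else 0)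
      = ∑ i : Fin (n + 1), t ^ (i : ℕ) • φ i := by
    rw [Finset.sum_range fun i => _]
    exact Finset.sum_congr rfl fun i _ => by rw [dif_pos i.isLt]
  rw [h1, h2, h3]

lemma isPolyDeg_monomial (a : ℝ) (c : X) (n : ℕ) :
    IsPolyDeg X n (fun t => (t - a) ^ n • c) := by
  refine ⟨fun i => (((-a) ^ (n - (i : ℕ)) * (n.choose (i : ℕ) : ℝ))) • c, fun t => ?_⟩
  show (t - a) ^ n • c = ∑ i : Fin (n + 1), t ^ (i : ℕ) •
    (((-a) ^ (n - (i : ℕ)) * (n.choose (i : ℕ) : ℝ)) • c)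
  have h1 : (t - a) ^ n = ∑ i ∈ Finset.range (n + 1), t ^ i * (-a) ^ (n - i) * n.choose i := by
    rw [sub_eq_add_neg, add_pow]
  rw [h1, Finset.sum_smul]
  rw [Finset.sum_range fun i => (t ^ i * (-a) ^ (n - i) * (n.choose i : ℝ)) • c]
  refine Finset.sum_congr rfl fun i _ => ?_
  rw [mul_assoc, mul_smul]

lemma isPolyDeg_sum {ι : Type*} {n : ℕ} (s : Finset ι) (f : ι → ℝ → X)
    (h : ∀ i ∈ s, IsPolyDeg X n (f i)) : IsPolyDeg X n (fun t => ∑ i ∈ s, f i t) := by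
  classical
  induction s using Finset.induction_on with
  | empty => simpa using isPolyDeg_zero (X := X) n
  | insert x s' hx ih =>
    simp only [Finset.sum_insert hx]
    exact isPolyDeg_add (h x (Finset.mem_insert_self _ _))
      (ih fun i hi => h i (Finset.mem_insert_of_mem hi))

end Alg

section Norm
variable {X : Type*} [NormedAddCommGroup X] [NormedSpace ℝ X]

lemma isPolyDeg_continuous {n : ℕ} {f : ℝ → X} (hf : IsPolyDeg X n f) : Continuous f := by
  obtain ⟨φ, hφ⟩ := hf
  rw [funext hφ]
  exact continuous_finset_sum _ fun i _ => (continuous_pow _).smul continuous_const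

lemma polyHasDerivAt (N : ℕ) (φ : Fin (N + 1) → X) (t : ℝ) :
    HasDerivAt (fun s => ∑ i : Fin (N + 1), s ^ (i : ℕ) • φ i)
      (∑ i : Fin (N + 1), (((i : ℕ) : ℝ) * t ^ ((i : ℕ) - 1)) • φ i) t :=
  HasDerivAt.fun_sum fun i _ => (hasDerivAt_pow _ _).smul_const _

lemma polyDerivEq (N : ℕ) (φ : Fin (N + 2) → X) (t : ℝ) :
    ∑ i : Fin (N + 2), (((i : ℕ) : ℝ) * t ^ ((i : ℕ) - 1)) • φ i
      = ∑ j : Fin (N + 1), t ^ (j : ℕ) • (((j : ℕ) + 1 : ℝ) • φ j.succ) := by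
  rw [Fin.sum_univ_succ]
  simp only [Fin.val_zero, Nat.cast_zero, zero_mul, zero_smul, zero_add, Fin.val_succ,
    Nat.add_sub_cancel, Nat.cast_add, Nat.cast_one]
  exact Finset.sum_congr rfl fun j _ => by rw [smul_smul, mul_comm]

lemma myIDW {f : ℝ → X} {n m : ℕ} {s : Set ℝ} {x : ℝ}
    (h : ContDiff ℝ (n : ℕ∞) f) (hs : UniqueDiffOn ℝ s) (hx : x ∈ s) (hmn : m ≤ n) :
    iteratedDerivWithin m f s x = iteratedDeriv m f x := by
  rw [iteratedDerivWithin_eq_iteratedFDerivWithin, iteratedDeriv_eq_iteratedFDeriv]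
  have h1 := (contDiff_iff_ftaylorSeries.mp h).hasFTaylorSeriesUpToOn s
  rw [← h1.eq_iteratedFDerivWithin_of_uniqueDiffOn (by exact_mod_cast hmn) hs hx]
  rfl

end Norm

end RitzAux

open RitzAux

/-- `p` is the temporal Ritz projection of `u` on `[a,b]`: the `X`-valued polynomial of
degree ≤ k with `p a = u a` whose derivative is the L²(a,b)-projection of `u'` onto
polynomials of degree ≤ k-1. -/
def IsRitzOn (X : Type*) [NormedAddCommGroup X] [InnerProductSpace ℂ X]
    (a b : ℝ) (k : ℕ) (u p : ℝ → X) : Prop :=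
  IsPolyDeg X k p ∧ p a = u a ∧
    ∀ χ : ℝ → X, IsPolyDeg X (k - 1) χ →
      (∫ t in a..b, (inner ℂ (deriv u t - deriv p t) (χ t) : ℂ)) = 0

set_option maxHeartbeats 2000000 in
theorem ritz_L2_in_time_approximation (k m : ℕ) (hk : 1 ≤ k) (hm : m ≤ k) :
    -- C depends only on k and m (not on τ, u, X)
    ∃ C : ℝ, 0 < C ∧
      -- X : a complex Hilbert space
      ∀ (X : Type u) [NormedAddCommGroup X] [InnerProductSpace ℂ X] [CompleteSpace X],
      ∀ (a τ : ℝ), 0 < τ →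
      ∀ u : ℝ → X, ContDiff ℝ (m + 1) u →
      ∀ p : ℝ → X, IsRitzOn X a (a + τ) k u p →
        Real.sqrt (∫ t in a..(a + τ), ‖u t - p t‖ ^ 2)
          ≤ C * τ ^ ((m : ℝ) + 3 / 2) *
            -- the W^{m+1,∞}(I;X) norm: max_{0 ≤ j ≤ m+1} sup_{t ∈ I} ‖u^{(j)}(t)‖
            (⨆ t : Set.Icc a (a + τ), ⨆ j : Fin (m + 2), ‖iteratedDeriv (j : ℕ) u (t : ℝ)‖) := by
  obtain ⟨K, rfl⟩ : ∃ K, k = K + 1 := ⟨k - 1, (Nat.succ_pred_eq_of_pos hk).symm⟩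
  refine ⟨1, one_pos, ?_⟩
  intro X _ _ _ a τ hτ u hu p hp
  set b := a + τ with hb
  have hab : a ≤ b := by simp [hb]; positivity
  have hab' : a < b := by simp [hb]; positivity
  obtain ⟨⟨φk, hφk⟩, hpa, horth⟩ := hp
  have hpdef : p = fun t => ∑ i : Fin (K + 2), t ^ (i : ℕ) • φk i := funext hφk
  subst hpdef
  -- M and its properties
  set M : ℝ := ⨆ t : Set.Icc a b, ⨆ j : Fin (m + 2), ‖iteratedDeriv (j : ℕ) u (t : ℝ)‖ with hMdef
  have hu' : ∀ j : ℕ, j ≤ m + 1 → Continuous (iteratedDeriv j u) := by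
    intro j hj
    exact hu.continuous_iteratedDeriv j (by exact_mod_cast Nat.cast_le.mpr hj)
  have hM : ∀ j : ℕ, j ≤ m + 1 → ∀ t ∈ Set.Icc a b, ‖iteratedDeriv j u t‖ ≤ M := by
    have hBj : ∀ j : Fin (m + 2), ∃ B : ℝ, ∀ t ∈ Set.Icc a b, ‖iteratedDeriv (j : ℕ) u t‖ ≤ B := by
      intro j
      exact (isCompact_Icc).exists_bound_of_continuousOn
        ((hu' j (by omega)).continuousOn)
    choose B hB using hBj
    set B0 : ℝ := ∑ j : Fin (m + 2), |B j| with hB0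
    have hBB0 : ∀ j : Fin (m + 2), B j ≤ B0 := by
      intro j
      calc B j ≤ |B j| := le_abs_self _
        _ ≤ B0 := Finset.single_le_sum (f := fun j : Fin (m+2) => |B j|)
            (fun i _ => abs_nonneg _) (Finset.mem_univ j)
    have hbdd : BddAbove (Set.range fun t : Set.Icc a b =>
        ⨆ j : Fin (m + 2), ‖iteratedDeriv (j : ℕ) u (t : ℝ)‖) := by
      refine ⟨B0, ?_⟩
      rintro y ⟨t, rfl⟩
      exact ciSup_le fun j => (hB j t t.2).trans (hBB0 j)
    intro j hj t ht
    have h1 : ‖iteratedDeriv j u t‖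
        ≤ ⨆ j' : Fin (m + 2), ‖iteratedDeriv (j' : ℕ) u t‖ := by
      have := le_ciSup (f := fun j' : Fin (m + 2) => ‖iteratedDeriv (j' : ℕ) u t‖)
        (Set.Finite.bddAbove (Set.finite_range _)) ⟨j, by omega⟩
      simpa using this
    exact h1.trans (le_ciSup hbdd ⟨t, ht⟩)
  have hM0 : 0 ≤ M := le_trans (norm_nonneg _) (hM 0 (by omega) a ⟨le_refl a, hab⟩)
  -- derivative of p
  set p : ℝ → X := fun t => ∑ i : Fin (K + 2), t ^ (i : ℕ) • φk i with hpdef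
  have hpd : ∀ t, HasDerivAt p (∑ i : Fin (K + 2), (((i : ℕ) : ℝ) * t ^ ((i : ℕ) - 1)) • φk i) t :=
    fun t => polyHasDerivAt (N := K + 1) φk t
  have hderiv_p : deriv p = fun t => ∑ j : Fin (K + 1), t ^ (j : ℕ) • (((j : ℕ) + 1 : ℝ) • φk j.succ) := by
    funext t
    rw [(hpd t).deriv, polyDerivEq]
  have hpoly_dp : IsPolyDeg X K (deriv p) := by
    rw [hderiv_p]; exact ⟨fun j => ((j : ℕ) + 1 : ℝ) • φk j.succ, fun t => rfl⟩
  have hcont_dp : Continuous (deriv p) := isPolyDeg_continuous hpoly_dp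
  have hcont_du : Continuous (deriv u) := hu.continuous_deriv (le_add_self)
  have hdiff_u : Differentiable ℝ u := hu.differentiable (by exact_mod_cast Nat.succ_ne_zero m)
  -- Taylor polynomial q
  obtain ⟨q, hq_poly, hq_bound⟩ : ∃ q : ℝ → X, IsPolyDeg X K q ∧
      ∀ t ∈ Set.Icc a b, ‖deriv u t - q t‖ ≤ M * τ ^ m := by
    match m, hu with
    | 0, hu =>
      refine ⟨fun _ => 0, isPolyDeg_zero K, fun t ht => ?_⟩
      simp only [sub_zero, pow_zero, mul_one]
      have := hM 1 (by omega) t ht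
      rwa [iteratedDeriv_one] at this
    | (n+1), hu =>
      set q : ℝ → X := taylorWithinEval (deriv u) n (Set.Icc a b) a with hq
      have hud : ContDiff ℝ ((n : ℕ∞) + 1) (deriv u) := by
        have h2 : ContDiff ℝ ((n + 1 : ℕ) : WithTop ℕ∞) (deriv u) := by
          have := (contDiff_succ_iff_deriv (n := ((n+1 : ℕ) : WithTop ℕ∞)) (f := u)).mp
            (by exact_mod_cast hu)
          exact this.2.2
        exact_mod_cast h2
      refine ⟨q, ?_, ?_⟩
      · -- polynomial structure
        have : q = fun x => ∑ i ∈ Finset.range (n + 1),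
            (fun i => fun x => (((i.factorial : ℝ))⁻¹ * (x - a) ^ i) •
              iteratedDerivWithin i (deriv u) (Set.Icc a b) a) i x := by
          funext x; rw [hq, taylor_within_apply]
        rw [this]
        refine isPolyDeg_sum _ _ fun i hi => ?_
        have h3 : (fun x : ℝ => (((i.factorial : ℝ))⁻¹ * (x - a) ^ i) •
            iteratedDerivWithin i (deriv u) (Set.Icc a b) a)
            = fun x : ℝ => (x - a) ^ i • (((i.factorial : ℝ))⁻¹ •
              iteratedDerivWithin i (deriv u) (Set.Icc a b) a) := by
          funext x; rw [smul_smul, mul_comm]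
        rw [h3]
        exact isPolyDeg_mono (isPolyDeg_monomial a _ i)
          (by simp only [Finset.mem_range] at hi; omega)
      · intro t ht
        have hC : ∀ y ∈ Set.Icc a b, ‖iteratedDerivWithin (n + 1) (deriv u) (Set.Icc a b) y‖ ≤ M := by
          intro y hy
          rw [myIDW hud (uniqueDiffOn_Icc hab') hy (le_refl _)]
          have : iteratedDeriv (n + 1) (deriv u) y = iteratedDeriv (n + 2) u y := by
            rw [iteratedDeriv_succ' (n := n + 1)]
          rw [this]
          exact hM (n + 2) (by omega) y hy
        have := taylor_mean_remainder_bound hab (hud.contDiffOn) ht hC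
        calc ‖deriv u t - q t‖ ≤ M * (t - a) ^ (n + 1) / (n.factorial : ℝ) := this
          _ ≤ M * τ ^ (n + 1) := by
              have h4 : (t - a) ^ (n + 1) ≤ τ ^ (n + 1) :=
                pow_le_pow_left₀ (by linarith [ht.1]) (by simp [hb] at ht ⊢; linarith [ht.2]) _
              have h5 : (1 : ℝ) ≤ (n.factorial : ℝ) := by exact_mod_cast n.factorial_pos
              calc M * (t - a) ^ (n + 1) / (n.factorial : ℝ)
                  ≤ M * (t - a) ^ (n + 1) / 1 := by
                    apply div_le_div_of_nonneg_left ?_ ?_ h5 <;> first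
                      | positivity
                      | exact mul_nonneg hM0 (pow_nonneg (by linarith [ht.1]) _)
                _ = M * (t - a) ^ (n + 1) := by ring
                _ ≤ M * τ ^ (n + 1) := by
                    exact mul_le_mul_of_nonneg_left h4 hM0
  have hq_cont : Continuous q := isPolyDeg_continuous hq_poly
  have hp_cont : Continuous p := isPolyDeg_continuous (X := X) ⟨φk, fun t => rfl⟩
  set g : ℝ → X := fun t => deriv u t - deriv p t with hgdef
  set r : ℝ → X := fun t => deriv u t - q t with hrdef
  have hg_cont : Continuous g := hcont_du.sub hcont_dp
  have hr_cont : Continuous r := hcont_du.sub hq_cont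
  set ε : ℝ := M * τ ^ m with hεdef
  have hε0 : 0 ≤ ε := mul_nonneg hM0 (by positivity)
  -- integrability facts
  have hgg : IntervalIntegrable (fun t => (inner ℂ (g t) (g t) : ℂ)) volume a b :=
    (hg_cont.inner hg_cont).intervalIntegrable a b
  have hgr : IntervalIntegrable (fun t => (inner ℂ (g t) (r t) : ℂ)) volume a b :=
    (hg_cont.inner hr_cont).intervalIntegrable a b
  have hgχ : IntervalIntegrable (fun t => (inner ℂ (g t) (deriv p t - q t) : ℂ)) volume a b :=
    (hg_cont.inner (hcont_dp.sub hq_cont)).intervalIntegrable a b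
  -- orthogonality
  have horth2 : (∫ t in a..b, (inner ℂ (g t) (deriv p t - q t) : ℂ)) = 0 :=
    horth (fun t => deriv p t - q t) (isPolyDeg_sub hpoly_dp hq_poly)
  have hkey : (∫ t in a..b, (inner ℂ (g t) (g t) : ℂ)) = ∫ t in a..b, (inner ℂ (g t) (r t) : ℂ) := by
    have h1 : ∀ t, (inner ℂ (g t) (g t) : ℂ)
        = (inner ℂ (g t) (r t) : ℂ) - (inner ℂ (g t) (deriv p t - q t) : ℂ) := by
      intro t
      rw [← inner_sub_right]
      congr 1
      simp only [hgdef, hrdef]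
      abel
    calc (∫ t in a..b, (inner ℂ (g t) (g t) : ℂ))
        = ∫ t in a..b, ((inner ℂ (g t) (r t) : ℂ) - (inner ℂ (g t) (deriv p t - q t) : ℂ)) :=
          intervalIntegral.integral_congr fun t _ => h1 t
      _ = (∫ t in a..b, (inner ℂ (g t) (r t) : ℂ))
            - ∫ t in a..b, (inner ℂ (g t) (deriv p t - q t) : ℂ) :=
          intervalIntegral.integral_sub hgr hgχ
      _ = ∫ t in a..b, (inner ℂ (g t) (r t) : ℂ) := by rw [horth2, sub_zero]
  set E : ℝ := ∫ t in a..b, ‖g t‖ ^ 2 with hEdef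
  have hE0 : 0 ≤ E := intervalIntegral.integral_nonneg hab fun t _ => sq_nonneg _
  have hE_eq : E = ∫ t in a..b, RCLike.re (inner ℂ (g t) (r t) : ℂ) := by
    have h1 := ContinuousLinearMap.intervalIntegral_comp_comm (RCLike.reCLM (K := ℂ)) hgg
    have h2 := ContinuousLinearMap.intervalIntegral_comp_comm (RCLike.reCLM (K := ℂ)) hgr
    have h3 : E = ∫ t in a..b, RCLike.reCLM (K := ℂ) (inner ℂ (g t) (g t) : ℂ) := by
      refine intervalIntegral.integral_congr fun t _ => ?_
      simp only [RCLike.reCLM_apply]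
      exact (inner_self_eq_norm_sq _).symm
    rw [h3, h1, hkey, ← h2]
    simp only [RCLike.reCLM_apply]
  have hrint : IntervalIntegrable (fun t => ‖r t‖ ^ 2) volume a b :=
    ((hr_cont.norm.pow 2)).intervalIntegrable a b
  have hgint2 : IntervalIntegrable (fun t => ‖g t‖ ^ 2) volume a b :=
    ((hg_cont.norm.pow 2)).intervalIntegrable a b
  have hR_le : (∫ t in a..b, ‖r t‖ ^ 2) ≤ τ * ε ^ 2 := by
    calc (∫ t in a..b, ‖r t‖ ^ 2) ≤ ∫ t in a..b, ε ^ 2 := by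
          refine intervalIntegral.integral_mono_on hab hrint (intervalIntegrable_const) ?_
          intro t ht
          have h1 := hq_bound t ht
          have h2 : ‖r t‖ ≤ ε := h1
          nlinarith [norm_nonneg (r t)]
      _ = τ * ε ^ 2 := by
        rw [intervalIntegral.integral_const, smul_eq_mul, hb]; ring_nf
  have hE_le : E ≤ τ * ε ^ 2 := by
    have h3 : E ≤ ∫ t in a..b, (‖g t‖ ^ 2 / 2 + ‖r t‖ ^ 2 / 2) := by
      rw [hE_eq]
      refine intervalIntegral.integral_mono_on hab
        (((RCLike.continuous_re.comp (hg_cont.inner hr_cont))).intervalIntegrable a b)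
        ((hgint2.div_const 2).add (hrint.div_const 2)) ?_
      intro t _
      have h4 := re_inner_le_norm (𝕜 := ℂ) (g t) (r t)
      nlinarith [sq_nonneg (‖g t‖ - ‖r t‖)]
    have h5 : ∫ t in a..b, (‖g t‖ ^ 2 / 2 + ‖r t‖ ^ 2 / 2)
        = E / 2 + (∫ t in a..b, ‖r t‖ ^ 2) / 2 := by
      rw [intervalIntegral.integral_add (hgint2.div_const 2) (hrint.div_const 2),
        intervalIntegral.integral_div, intervalIntegral.integral_div]
    rw [h5] at h3
    linarith
  -- Cauchy-Schwarz for the L¹ norm of g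
  set A : ℝ := ∫ t in a..b, ‖g t‖ with hAdef
  have hgint1 : IntervalIntegrable (fun t => ‖g t‖) volume a b :=
    hg_cont.norm.intervalIntegrable a b
  have hA0 : 0 ≤ A := intervalIntegral.integral_nonneg hab fun t _ => norm_nonneg _
  have hA2 : A ^ 2 ≤ τ * E := by
    have h0 : 0 ≤ ∫ t in a..b, (‖g t‖ - A / τ) ^ 2 :=
      intervalIntegral.integral_nonneg hab fun t _ => sq_nonneg _
    have h1 : Set.EqOn (fun t => (‖g t‖ - A / τ) ^ 2)
        (fun t => (‖g t‖ ^ 2 - (2 * (A / τ)) * ‖g t‖) + (A / τ) ^ 2) (Set.uIcc a b) :=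
      fun t _ => by ring
    have h2 : ∫ t in a..b, (‖g t‖ - A / τ) ^ 2
        = (E - (2 * (A / τ)) * A) + (A / τ) ^ 2 * τ := by
      rw [intervalIntegral.integral_congr h1,
        intervalIntegral.integral_add (hgint2.sub ((hgint1.const_mul _)))
          (intervalIntegrable_const),
        intervalIntegral.integral_sub hgint2 (hgint1.const_mul _),
        intervalIntegral.integral_const_mul, intervalIntegral.integral_const, smul_eq_mul, hb]
      ring_nf
      rw [hEdef, hAdef, hb]
      ring
    rw [h2] at h0
    have hτ' : τ ≠ 0 := ne_of_gt hτ
    have h6 : 0 ≤ E - A ^ 2 / τ := by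
      have : (E - 2 * (A / τ) * A) + (A / τ) ^ 2 * τ = E - A ^ 2 / τ := by
        field_simp; ring
      linarith [this ▸ h0]
    rw [← sub_nonneg]
    have h7 : τ * E - A ^ 2 = τ * (E - A ^ 2 / τ) := by
      field_simp
    rw [h7]
    exact mul_nonneg hτ.le h6
  have hAτε : A ≤ τ * ε := by
    have hA2' : A ^ 2 ≤ (τ * ε) ^ 2 :=
      calc A ^ 2 ≤ τ * E := hA2
        _ ≤ τ * (τ * ε ^ 2) := mul_le_mul_of_nonneg_left hE_le hτ.le
        _ = (τ * ε) ^ 2 := by ring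
    calc A = Real.sqrt (A ^ 2) := (Real.sqrt_sq hA0).symm
      _ ≤ Real.sqrt ((τ * ε) ^ 2) := Real.sqrt_le_sqrt hA2'
      _ = τ * ε := Real.sqrt_sq (mul_nonneg hτ.le hε0)
  -- pointwise bound on u - p
  have hupa : u a - p a = 0 := by rw [hpa, sub_self]
  have hup : ∀ t ∈ Set.Icc a b, ‖u t - p t‖ ≤ τ * ε := by
    intro t ht
    have hderiv_up : deriv (fun s => u s - p s) = g := by
      funext s
      rw [deriv_fun_sub (hdiff_u s) (hpd s).differentiableAt]
    have hf : ∀ s ∈ Set.uIcc a t, DifferentiableAt ℝ (fun s => u s - p s) s :=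
      fun s _ => (hdiff_u s).sub (hpd s).differentiableAt
    have hint : IntervalIntegrable (deriv fun s => u s - p s) volume a t := by
      rw [hderiv_up]; exact hg_cont.intervalIntegrable a t
    have h6 : ∫ s in a..t, deriv (fun s => u s - p s) s = (u t - p t) - (u a - p a) :=
      intervalIntegral.integral_deriv_eq_sub hf hint
    rw [hupa, sub_zero, hderiv_up] at h6
    calc ‖u t - p t‖ = ‖∫ s in a..t, g s‖ := by rw [h6]
      _ ≤ ∫ s in a..t, ‖g s‖ := intervalIntegral.norm_integral_le_integral_norm ht.1
      _ ≤ A := intervalIntegral.integral_mono_interval le_rfl ht.1 ht.2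
          (Filter.Eventually.of_forall fun s => norm_nonneg _) hgint1
      _ ≤ τ * ε := hAτε
  -- conclusion
  have hfinal : (∫ t in a..b, ‖u t - p t‖ ^ 2) ≤ τ * (τ * ε) ^ 2 := by
    calc (∫ t in a..b, ‖u t - p t‖ ^ 2) ≤ ∫ t in a..b, (τ * ε) ^ 2 := by
          refine intervalIntegral.integral_mono_on hab
            ((((hdiff_u.continuous.sub hp_cont).norm.pow 2)).intervalIntegrable a b)
            intervalIntegrable_const ?_
          intro t ht
          have := hup t ht
          nlinarith [norm_nonneg (u t - p t), mul_nonneg hτ.le hε0]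
      _ = τ * (τ * ε) ^ 2 := by
        rw [intervalIntegral.integral_const, smul_eq_mul, hb]; ring_nf
  calc Real.sqrt (∫ t in a..b, ‖u t - p t‖ ^ 2)
      ≤ Real.sqrt (τ * (τ * ε) ^ 2) := Real.sqrt_le_sqrt hfinal
    _ = 1 * τ ^ ((m : ℝ) + 3 / 2) * M := by
        rw [Real.sqrt_mul hτ.le, Real.sqrt_sq (mul_nonneg hτ.le hε0), hεdef]
        rw [Real.rpow_add hτ, Real.rpow_natCast,
          show ((3 : ℝ) / 2) = 1 + 1 / 2 by norm_num,
          Real.rpow_add hτ, Real.rpow_one, ← Real.sqrt_eq_rpow]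
        ring
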